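/- arXiv:2509.07322 — 2 statements merged into one kernel-verified Lean document; each statement's English description precedes it below -/
import Mathlib

section
/- (Neyman orthogonality) Let S(β₀, η) = (W + Δh(H))·(V + Δπ(H))·X̃ where η = (h, π), Δh = h₀ − h, Δπ = π₀ − π, V = A − π₀(H), and E[W | H] = E[V | H] = 0 with W and V satisfying E[W·V | H] = 0. Then the Gateaux derivative of ρ ↦ E[S(β₀, η₀ + ρ·Δη)] at ρ = 0 equals E[(V·Δh(H) + W·Δπ(H))·X̃], which is the zero vector. -/
open MeasureTheory

lemma auxZero {Ω : Type*} {mΩ : MeasurableSpace Ω} (μ : Measure Ω) [IsProbabilityMeasure μ]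
    (m : MeasurableSpace Ω) (hm : m ≤ mΩ) (f g : Ω → ℝ)
    (hf : Integrable f μ) (hfm : μ[f|m] =ᵐ[μ] 0)
    (hg : StronglyMeasurable[m] g) (hgb : ∃ C, ∀ ω, |g ω| ≤ C) :
    ∫ ω, g ω * f ω ∂μ = 0 := by
  haveI : SigmaFinite (μ.trim hm) := by
    have : IsFiniteMeasure (μ.trim hm) := isFiniteMeasure_trim hm
    infer_instance
  have hgf : Integrable (fun ω => g ω * f ω) μ :=
    hf.bdd_mul ((hg.mono hm).aestronglyMeasurable) (c := hgb.choose) (Filter.Eventually.of_forall (by simpa [Real.norm_eq_abs] using hgb.choose_spec))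
  have h1 : μ[fun ω => g ω * f ω|m] =ᵐ[μ] fun ω => g ω * (μ[f|m]) ω := by
    have := condExp_mul_of_stronglyMeasurable_left hg (μ := μ) (by exact hgf) hf
    exact this
  have h2 : μ[fun ω => g ω * f ω|m] =ᵐ[μ] 0 := by
    refine h1.trans ?_
    filter_upwards [hfm] with ω hω
    simp [hω]
  calc ∫ ω, g ω * f ω ∂μ = ∫ ω, (μ[fun ω => g ω * f ω|m]) ω ∂μ := (integral_condExp hm).symm
    _ = 0 := by rw [integral_congr_ae h2]; simp

/-- Neyman orthogonality: with `S(β₀, η₀ + ρ Δη) = (W + ρ Δh)(V + ρ Δπ) X̃`, the Gateaux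
derivative of `ρ ↦ E[S(β₀, η₀ + ρ Δη)]` at `ρ = 0` equals `E[(V Δh + W Δπ) X̃]`, which is
the zero vector. -/
theorem stmt3 {Ω : Type*} {mΩ : MeasurableSpace Ω} (μ : Measure Ω) [IsProbabilityMeasure μ]
    (m : MeasurableSpace Ω) (hm : m ≤ mΩ) {d : ℕ}
    (W V Δh Δπ : Ω → ℝ) (X : Ω → EuclideanSpace ℝ (Fin d))
    (hWmean : μ[W|m] =ᵐ[μ] 0) (hVmean : μ[V|m] =ᵐ[μ] 0)
    (hWVmean : μ[fun ω => W ω * V ω|m] =ᵐ[μ] 0)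
    (hΔhmeas : StronglyMeasurable[m] Δh) (hΔπmeas : StronglyMeasurable[m] Δπ)
    (hXmeas : StronglyMeasurable[m] X)
    (hΔhbdd : ∃ C, ∀ ω, |Δh ω| ≤ C) (hΔπbdd : ∃ C, ∀ ω, |Δπ ω| ≤ C)
    (hXbdd : ∃ C, ∀ ω, ‖X ω‖ ≤ C)
    (hWint : Integrable W μ) (hVint : Integrable V μ)
    (hWVint : Integrable (fun ω => W ω * V ω) μ) :
    HasDerivAt
      (fun ρ : ℝ => ∫ ω, ((W ω + ρ * Δh ω) * (V ω + ρ * Δπ ω)) • X ω ∂μ)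
      (∫ ω, (V ω * Δh ω + W ω * Δπ ω) • X ω ∂μ) 0
    ∧ ∫ ω, (V ω * Δh ω + W ω * Δπ ω) • X ω ∂μ = 0 := by
  obtain ⟨C₁', hC₁'⟩ := hΔhbdd
  obtain ⟨C₂', hC₂'⟩ := hΔπbdd
  obtain ⟨C₃', hC₃'⟩ := hXbdd
  set C₁ := max C₁' 0 with hC₁def
  set C₂ := max C₂' 0 with hC₂def
  set C₃ := max C₃' 0 with hC₃def
  have hC₁ : ∀ ω, |Δh ω| ≤ C₁ := fun ω => (hC₁' ω).trans (le_max_left _ _)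
  have hC₂ : ∀ ω, |Δπ ω| ≤ C₂ := fun ω => (hC₂' ω).trans (le_max_left _ _)
  have hC₃ : ∀ ω, ‖X ω‖ ≤ C₃ := fun ω => (hC₃' ω).trans (le_max_left _ _)
  have hC₁0 : 0 ≤ C₁ := le_max_right _ _
  have hC₂0 : 0 ≤ C₂ := le_max_right _ _
  have hC₃0 : 0 ≤ C₃ := le_max_right _ _
  have hΔhae : AEStronglyMeasurable[mΩ] Δh μ := (hΔhmeas.mono hm).aestronglyMeasurable
  have hΔπae : AEStronglyMeasurable[mΩ] Δπ μ := (hΔπmeas.mono hm).aestronglyMeasurable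
  have hXae : AEStronglyMeasurable[mΩ] X μ := (hXmeas.mono hm).aestronglyMeasurable
  have hXmem : MemLp X ⊤ μ :=
    memLp_top_of_bound hXae C₃ (Filter.Eventually.of_forall hC₃)
  -- integrability facts
  have hA : Integrable (fun ω => V ω * Δh ω) μ := by
    have := hVint.bdd_mul hΔhae (Filter.Eventually.of_forall fun ω => by rw [Real.norm_eq_abs]; exact hC₁ ω)
    simpa [mul_comm] using this
  have hB : Integrable (fun ω => W ω * Δπ ω) μ := by
    have := hWint.bdd_mul hΔπae (Filter.Eventually.of_forall fun ω => by rw [Real.norm_eq_abs]; exact hC₂ ω)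
    simpa [mul_comm] using this
  have hbint : Integrable (fun ω => (V ω * Δh ω + W ω * Δπ ω) • X ω) μ :=
    (hA.add hB).smul_of_top_left hXmem
  have haint : Integrable (fun ω => (W ω * V ω) • X ω) μ :=
    hWVint.smul_of_top_left hXmem
  have hcint : Integrable (fun ω => (Δh ω * Δπ ω) • X ω) μ := by
    have hasm : AEStronglyMeasurable[mΩ] (fun ω => (Δh ω * Δπ ω) • X ω) μ :=
      (hΔhae.mul hΔπae).smul hXae
    refine (memLp_top_of_bound hasm (C₁ * C₂ * C₃)
      (Filter.Eventually.of_forall fun ω => ?_)).integrable le_top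
    rw [norm_smul, Real.norm_eq_abs, abs_mul]
    exact mul_le_mul (mul_le_mul (hC₁ ω) (hC₂ ω) (abs_nonneg _) hC₁0)
      (hC₃ ω) (norm_nonneg _) (by positivity)
  set a := ∫ ω, (W ω * V ω) • X ω ∂μ with ha
  set b := ∫ ω, (V ω * Δh ω + W ω * Δπ ω) • X ω ∂μ with hb
  set c := ∫ ω, (Δh ω * Δπ ω) • X ω ∂μ with hc
  -- the integral is a quadratic polynomial in ρ
  have key : (fun ρ : ℝ => ∫ ω, ((W ω + ρ * Δh ω) * (V ω + ρ * Δπ ω)) • X ω ∂μ)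
      = fun ρ : ℝ => a + ρ • b + ρ ^ 2 • c := by
    funext ρ
    have hpt : (fun ω => ((W ω + ρ * Δh ω) * (V ω + ρ * Δπ ω)) • X ω)
        = fun ω => (W ω * V ω) • X ω + ρ • ((V ω * Δh ω + W ω * Δπ ω) • X ω)
          + ρ ^ 2 • ((Δh ω * Δπ ω) • X ω) := by
      funext ω
      rw [smul_smul, smul_smul, ← add_smul, ← add_smul]
      congr 1
      ring
    have hbintρ : Integrable (fun ω => ρ • ((V ω * Δh ω + W ω * Δπ ω) • X ω)) μ :=
      hbint.smul ρ
    have hcintρ : Integrable (fun ω => ρ ^ 2 • ((Δh ω * Δπ ω) • X ω)) μ :=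
      hcint.smul (ρ ^ 2)
    have hab : Integrable
        (fun ω => (W ω * V ω) • X ω + ρ • ((V ω * Δh ω + W ω * Δπ ω) • X ω)) μ :=
      haint.add hbintρ
    rw [hpt, integral_add hab hcintρ, integral_add haint hbintρ,
      integral_smul, integral_smul]
  -- derivative
  have hderiv : HasDerivAt
      (fun ρ : ℝ => ∫ ω, ((W ω + ρ * Δh ω) * (V ω + ρ * Δπ ω)) • X ω ∂μ) b 0 := by
    rw [key]
    have h1 : HasDerivAt (fun ρ : ℝ => ρ • b) b 0 := by
      simpa using (hasDerivAt_id (0 : ℝ)).smul_const b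
    have h2 : HasDerivAt (fun ρ : ℝ => ρ ^ 2 • c) 0 0 := by
      simpa using (hasDerivAt_pow 2 (0 : ℝ)).smul_const c
    have h3 := ((hasDerivAt_const (0 : ℝ) a).add h1).add h2
    rw [zero_add, add_zero] at h3
    exact h3
  -- b = 0
  have hbzero : b = 0 := by
    rw [hb]
    refine integral_eq_zero_of_forall_integral_inner_eq_zero ℝ _ hbint fun v => ?_
    have hvmeas : StronglyMeasurable[m] (fun ω => (inner ℝ v (X ω) : ℝ)) :=
      (innerSL ℝ v).continuous.comp_stronglyMeasurable hXmeas
    have hvbdd : ∀ ω, |(inner ℝ v (X ω) : ℝ)| ≤ ‖v‖ * C₃ := fun ω =>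
      (abs_real_inner_le_norm v (X ω)).trans
        (mul_le_mul_of_nonneg_left (hC₃ ω) (norm_nonneg v))
    have hg1 : StronglyMeasurable[m] (fun ω => Δh ω * (inner ℝ v (X ω) : ℝ)) :=
      hΔhmeas.mul hvmeas
    have hg2 : StronglyMeasurable[m] (fun ω => Δπ ω * (inner ℝ v (X ω) : ℝ)) :=
      hΔπmeas.mul hvmeas
    have hg1b' : ∀ ω, |Δh ω * (inner ℝ v (X ω) : ℝ)| ≤ C₁ * (‖v‖ * C₃) := fun ω => by
      rw [abs_mul]
      exact mul_le_mul (hC₁ ω) (hvbdd ω) (abs_nonneg _) hC₁0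
    have hg2b' : ∀ ω, |Δπ ω * (inner ℝ v (X ω) : ℝ)| ≤ C₂ * (‖v‖ * C₃) := fun ω => by
      rw [abs_mul]
      exact mul_le_mul (hC₂ ω) (hvbdd ω) (abs_nonneg _) hC₂0
    have hg1b : ∃ C, ∀ ω, |Δh ω * (inner ℝ v (X ω) : ℝ)| ≤ C := ⟨_, hg1b'⟩
    have hg2b : ∃ C, ∀ ω, |Δπ ω * (inner ℝ v (X ω) : ℝ)| ≤ C := ⟨_, hg2b'⟩
    have t1 : ∫ ω, (Δh ω * (inner ℝ v (X ω) : ℝ)) * V ω ∂μ = 0 :=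
      auxZero μ m hm V _ hVint hVmean hg1 hg1b
    have t2 : ∫ ω, (Δπ ω * (inner ℝ v (X ω) : ℝ)) * W ω ∂μ = 0 :=
      auxZero μ m hm W _ hWint hWmean hg2 hg2b
    have hint1 : Integrable (fun ω => (Δh ω * (inner ℝ v (X ω) : ℝ)) * V ω) μ :=
      hVint.bdd_mul ((hg1.mono hm).aestronglyMeasurable)
        (Filter.Eventually.of_forall fun ω => by rw [Real.norm_eq_abs]; exact hg1b' ω)
    have hint2 : Integrable (fun ω => (Δπ ω * (inner ℝ v (X ω) : ℝ)) * W ω) μ :=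
      hWint.bdd_mul ((hg2.mono hm).aestronglyMeasurable)
        (Filter.Eventually.of_forall fun ω => by rw [Real.norm_eq_abs]; exact hg2b' ω)
    have hpt : (fun ω => (inner ℝ v ((V ω * Δh ω + W ω * Δπ ω) • X ω) : ℝ))
        = fun ω => (Δh ω * (inner ℝ v (X ω) : ℝ)) * V ω
          + (Δπ ω * (inner ℝ v (X ω) : ℝ)) * W ω := by
      funext ω
      rw [real_inner_smul_right]
      ring
    rw [hpt, integral_add hint1 hint2, t1, t2, add_zero]
  exact ⟨hbzero ▸ hderiv, hbzero⟩
end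

section
/- With the notation of the previous decomposition and additionally E[W·V | H] = 0, for every fixed a ∈ ℝᵈ: |aᵀ·E[(W + Δh)·(V + Δπ)·X̃]| ≤ σ_max·‖a‖₂·(E[(Δπ(H)·Δh(H))²])^{1/2}, where σ²_max = λ_max(E[X̃X̃ᵀ]). -/
open MeasureTheory Matrix

private lemma int_of_bdd {Ω : Type*} {mΩ : MeasurableSpace Ω} {μ : Measure Ω}
    [IsProbabilityMeasure μ] {f : Ω → ℝ} (hf : AEStronglyMeasurable f μ)
    {C : ℝ} (h : ∀ ω, |f ω| ≤ C) : Integrable f μ :=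
  (integrable_const C).mono' hf (Filter.Eventually.of_forall fun ω => by
    simpa [Real.norm_eq_abs] using h ω)

private lemma integral_mul_eq_zero {Ω : Type*} {mΩ : MeasurableSpace Ω} (μ : Measure Ω)
    [IsProbabilityMeasure μ] (m : MeasurableSpace Ω) (hm : m ≤ mΩ)
    (φ ψ : Ω → ℝ) (hφ : Integrable φ μ) (h0 : μ[φ|m] =ᵐ[μ] 0)
    (hψ : StronglyMeasurable[m] ψ) {C : ℝ} (hC : ∀ ω, |ψ ω| ≤ C) :
    ∫ ω, ψ ω * φ ω ∂μ = 0 := by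
  have hψm : AEStronglyMeasurable[mΩ] ψ μ := (hψ.mono hm).aestronglyMeasurable
  have hint : Integrable (ψ * φ) μ :=
    hφ.bdd_mul hψm (c := C) (Filter.Eventually.of_forall fun ω => by simpa [Real.norm_eq_abs] using hC ω)
  have hpull := condExp_mul_of_stronglyMeasurable_left (μ := μ) hψ hint hφ
  calc ∫ ω, ψ ω * φ ω ∂μ = ∫ ω, (ψ * φ) ω ∂μ := rfl
    _ = ∫ ω, (μ[ψ * φ|m]) ω ∂μ := (integral_condExp hm).symm
    _ = ∫ ω, (ψ * μ[φ|m]) ω ∂μ := integral_congr_ae hpull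
    _ = ∫ ω, (0:ℝ) ∂μ := integral_congr_ae (h0.mono fun ω hω => by
          simp [Pi.mul_apply, hω, Pi.zero_apply])
    _ = 0 := by simp

/-- Rate-double-robustness bound: with `E[W|H] = E[V|H] = 0`, `E[W V|H] = 0`, and
`σ²max = λ_max(E[X̃X̃ᵀ])`, for every fixed `a ∈ ℝᵈ`,
`|aᵀ E[(W + Δh)(V + Δπ) X̃]| ≤ σmax ‖a‖₂ (E[(Δπ Δh)²])^{1/2}`. -/
theorem stmt11 {Ω : Type*} {mΩ : MeasurableSpace Ω} (μ : Measure Ω) [IsProbabilityMeasure μ]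
    (m : MeasurableSpace Ω) (hm : m ≤ mΩ) {d : ℕ}
    (W V Δh Δπ : Ω → ℝ) (X : Ω → Fin d → ℝ) (σmax : ℝ) (hσ : 0 ≤ σmax)
    (hWmean : μ[W|m] =ᵐ[μ] 0) (hVmean : μ[V|m] =ᵐ[μ] 0)
    (hWVmean : μ[fun ω => W ω * V ω|m] =ᵐ[μ] 0)
    (hΔhmeas : StronglyMeasurable[m] Δh) (hΔπmeas : StronglyMeasurable[m] Δπ)
    (hXmeas : ∀ i, StronglyMeasurable[m] (fun ω => X ω i))
    (hΔhbdd : ∃ C, ∀ ω, |Δh ω| ≤ C) (hΔπbdd : ∃ C, ∀ ω, |Δπ ω| ≤ C)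
    (hXbdd : ∃ C, ∀ ω i, |X ω i| ≤ C)
    (hWint : Integrable W μ) (hVint : Integrable V μ)
    (hWVint : Integrable (fun ω => W ω * V ω) μ)
    (Sig : Matrix (Fin d) (Fin d) ℝ)
    (hSig : ∀ i j, Sig i j = ∫ ω, X ω i * X ω j ∂μ)
    (hSigub : ∀ v : Fin d → ℝ, v ⬝ᵥ Sig.mulVec v ≤ σmax ^ 2 * (v ⬝ᵥ v))
    (a : Fin d → ℝ) :
    |∫ ω, ((W ω + Δh ω) * (V ω + Δπ ω)) * ∑ i, a i * X ω i ∂μ|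
      ≤ σmax * Real.sqrt (∑ i, (a i) ^ 2)
          * Real.sqrt (∫ ω, (Δπ ω * Δh ω) ^ 2 ∂μ) := by
  obtain ⟨Ch, hCh⟩ := hΔhbdd
  obtain ⟨Cπ, hCπ⟩ := hΔπbdd
  obtain ⟨Cx, hCx⟩ := hXbdd
  set g : Ω → ℝ := fun ω => ∑ i, a i * X ω i with hg_def
  have hgmeas : StronglyMeasurable[m] g :=
    Finset.stronglyMeasurable_fun_sum _ fun i _ => (hXmeas i).const_mul (a i)
  set Cg : ℝ := ∑ i : Fin d, |a i| * |Cx| with hCg_def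
  have hCg0 : 0 ≤ Cg := Finset.sum_nonneg fun i _ => mul_nonneg (abs_nonneg _) (abs_nonneg _)
  have hg_bdd : ∀ ω, |g ω| ≤ Cg := by
    intro ω
    calc |g ω| ≤ ∑ i : Fin d, |a i * X ω i| := Finset.abs_sum_le_sum_abs _ _
      _ ≤ Cg := Finset.sum_le_sum fun i _ => by
          rw [abs_mul]
          exact mul_le_mul_of_nonneg_left ((hCx ω i).trans (le_abs_self _)) (abs_nonneg _)
  have hΔh' : ∀ ω, |Δh ω| ≤ |Ch| := fun ω => (hCh ω).trans (le_abs_self _)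
  have hΔπ' : ∀ ω, |Δπ ω| ≤ |Cπ| := fun ω => (hCπ ω).trans (le_abs_self _)
  -- the four pieces
  have hf1 : ∫ ω, g ω * (W ω * V ω) ∂μ = 0 :=
    integral_mul_eq_zero μ m hm _ g hWVint hWVmean hgmeas hg_bdd
  have hf2 : ∫ ω, (Δπ ω * g ω) * W ω ∂μ = 0 := by
    refine integral_mul_eq_zero μ m hm W _ hWint hWmean (hΔπmeas.mul hgmeas)
      (C := |Cπ| * Cg) fun ω => ?_
    rw [abs_mul]
    exact mul_le_mul (hΔπ' ω) (hg_bdd ω) (abs_nonneg _) (abs_nonneg _)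
  have hf3 : ∫ ω, (Δh ω * g ω) * V ω ∂μ = 0 := by
    refine integral_mul_eq_zero μ m hm V _ hVint hVmean (hΔhmeas.mul hgmeas)
      (C := |Ch| * Cg) fun ω => ?_
    rw [abs_mul]
    exact mul_le_mul (hΔh' ω) (hg_bdd ω) (abs_nonneg _) (abs_nonneg _)
  -- integrability
  have hgm : AEStronglyMeasurable[mΩ] g μ := (hgmeas.mono hm).aestronglyMeasurable
  have hum : AEStronglyMeasurable[mΩ] (fun ω => Δπ ω * Δh ω) μ :=
    ((hΔπmeas.mul hΔhmeas).mono hm).aestronglyMeasurable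
  have I1 : Integrable (fun ω => g ω * (W ω * V ω)) μ :=
    hWVint.bdd_mul hgm (c := Cg) (Filter.Eventually.of_forall fun ω => by simpa [Real.norm_eq_abs] using hg_bdd ω)
  have I2 : Integrable (fun ω => (Δπ ω * g ω) * W ω) μ := by
    refine hWint.bdd_mul (((hΔπmeas.mul hgmeas).mono hm).aestronglyMeasurable)
      (c := |Cπ| * Cg) (Filter.Eventually.of_forall fun ω => ?_)
    rw [Real.norm_eq_abs, abs_mul]
    exact mul_le_mul (hΔπ' ω) (hg_bdd ω) (abs_nonneg _) (abs_nonneg _)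
  have I3 : Integrable (fun ω => (Δh ω * g ω) * V ω) μ := by
    refine hVint.bdd_mul (((hΔhmeas.mul hgmeas).mono hm).aestronglyMeasurable)
      (c := |Ch| * Cg) (Filter.Eventually.of_forall fun ω => ?_)
    rw [Real.norm_eq_abs, abs_mul]
    exact mul_le_mul (hΔh' ω) (hg_bdd ω) (abs_nonneg _) (abs_nonneg _)
  have I4 : Integrable (fun ω => (Δπ ω * Δh ω) * g ω) μ := by
    refine int_of_bdd (hum.mul hgm) (C := (|Cπ| * |Ch|) * Cg) fun ω => ?_
    rw [abs_mul, abs_mul]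
    exact mul_le_mul (mul_le_mul (hΔπ' ω) (hΔh' ω) (abs_nonneg _) (abs_nonneg _))
      (hg_bdd ω) (abs_nonneg _) (mul_nonneg (abs_nonneg _) (abs_nonneg _))
  -- reduce to the product term
  have hkey : ∫ ω, ((W ω + Δh ω) * (V ω + Δπ ω)) * g ω ∂μ
      = ∫ ω, (Δπ ω * Δh ω) * g ω ∂μ := by
    have hexp : ∫ ω, ((W ω + Δh ω) * (V ω + Δπ ω)) * g ω ∂μ
        = ∫ ω, (g ω * (W ω * V ω) + (Δπ ω * g ω) * W ω
            + (Δh ω * g ω) * V ω + (Δπ ω * Δh ω) * g ω) ∂μ :=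
      integral_congr_ae (Filter.Eventually.of_forall fun ω => by ring)
    have I12 : Integrable (fun ω => g ω * (W ω * V ω) + Δπ ω * g ω * W ω) μ := I1.add I2
    have I123 : Integrable (fun ω => g ω * (W ω * V ω) + Δπ ω * g ω * W ω
        + Δh ω * g ω * V ω) μ := I12.add I3
    rw [hexp, integral_add I123 I4, integral_add I12 I3, integral_add I1 I2, hf1, hf2, hf3]
    ring
  -- Cauchy–Schwarz
  have hpq : Real.HolderConjugate 2 2 := Real.HolderConjugate.two_two
  have hMu : MemLp (fun ω => Δπ ω * Δh ω) (ENNReal.ofReal 2) μ := by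
    refine MemLp.of_bound hum (|Cπ| * |Ch|) (Filter.Eventually.of_forall fun ω => ?_)
    rw [Real.norm_eq_abs, abs_mul]
    exact mul_le_mul (hΔπ' ω) (hΔh' ω) (abs_nonneg _) (abs_nonneg _)
  have hMg : MemLp g (ENNReal.ofReal 2) μ :=
    MemLp.of_bound hgm Cg (Filter.Eventually.of_forall fun ω => by
      simpa [Real.norm_eq_abs] using hg_bdd ω)
  have hCS : |∫ ω, (Δπ ω * Δh ω) * g ω ∂μ|
      ≤ Real.sqrt (∫ ω, (Δπ ω * Δh ω) ^ 2 ∂μ) * Real.sqrt (∫ ω, g ω ^ 2 ∂μ) := by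
    have h1 : |∫ ω, (Δπ ω * Δh ω) * g ω ∂μ| ≤ ∫ ω, ‖Δπ ω * Δh ω‖ * ‖g ω‖ ∂μ := by
      calc |∫ ω, (Δπ ω * Δh ω) * g ω ∂μ| ≤ ∫ ω, ‖(Δπ ω * Δh ω) * g ω‖ ∂μ := by
            simpa [Real.norm_eq_abs] using norm_integral_le_integral_norm
              (fun ω => (Δπ ω * Δh ω) * g ω) (μ := μ)
        _ = ∫ ω, ‖Δπ ω * Δh ω‖ * ‖g ω‖ ∂μ := by
            simp [norm_mul]
    have h2 := integral_mul_norm_le_Lp_mul_Lq (μ := μ) hpq hMu hMg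
    have habs : ∀ x : ℝ, ‖x‖ ^ (2:ℝ) = x ^ 2 := fun x => by
      rw [show ((2:ℝ)) = ((2:ℕ):ℝ) by norm_num, Real.rpow_natCast, Real.norm_eq_abs, sq_abs]
    have hnorm1 : ∫ ω, ‖Δπ ω * Δh ω‖ ^ (2:ℝ) ∂μ = ∫ ω, (Δπ ω * Δh ω) ^ 2 ∂μ :=
      integral_congr_ae (Filter.Eventually.of_forall fun ω => habs _)
    have hnorm2 : ∫ ω, ‖g ω‖ ^ (2:ℝ) ∂μ = ∫ ω, g ω ^ 2 ∂μ :=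
      integral_congr_ae (Filter.Eventually.of_forall fun ω => habs _)
    rw [hnorm1, hnorm2] at h2
    calc |∫ ω, (Δπ ω * Δh ω) * g ω ∂μ| ≤ ∫ ω, ‖Δπ ω * Δh ω‖ * ‖g ω‖ ∂μ := h1
      _ ≤ (∫ ω, (Δπ ω * Δh ω) ^ 2 ∂μ) ^ ((1:ℝ)/2) * (∫ ω, g ω ^ 2 ∂μ) ^ ((1:ℝ)/2) := h2
      _ = _ := by rw [Real.sqrt_eq_rpow, Real.sqrt_eq_rpow]
  -- compute ∫ g²
  have hIg : ∫ ω, g ω ^ 2 ∂μ = a ⬝ᵥ Sig.mulVec a := by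
    have hptwise : ∀ ω, g ω ^ 2 = ∑ i, ∑ j, (a i * a j) * (X ω i * X ω j) := by
      intro ω
      rw [pow_two, hg_def, Finset.sum_mul_sum]
      exact Finset.sum_congr rfl fun i _ => Finset.sum_congr rfl fun j _ => by ring
    have hintij : ∀ i j : Fin d,
        Integrable (fun ω => (a i * a j) * (X ω i * X ω j)) μ := by
      intro i j
      refine int_of_bdd ((((hXmeas i).mul (hXmeas j)).const_mul _).mono
        hm).aestronglyMeasurable (C := |a i * a j| * (|Cx| * |Cx|)) fun ω => ?_
      rw [abs_mul]
      refine mul_le_mul_of_nonneg_left ?_ (abs_nonneg _)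
      rw [abs_mul]
      exact mul_le_mul ((hCx ω i).trans (le_abs_self _)) ((hCx ω j).trans (le_abs_self _))
        (abs_nonneg _) (abs_nonneg _)
    calc ∫ ω, g ω ^ 2 ∂μ = ∫ ω, ∑ i, ∑ j, (a i * a j) * (X ω i * X ω j) ∂μ :=
          integral_congr_ae (Filter.Eventually.of_forall fun ω => hptwise ω)
      _ = ∑ i, ∑ j, ∫ ω, (a i * a j) * (X ω i * X ω j) ∂μ := by
          rw [integral_finset_sum _ fun i _ => integrable_finset_sum _ fun j _ => hintij i j]
          exact Finset.sum_congr rfl fun i _ => integral_finset_sum _ fun j _ => hintij i j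
      _ = ∑ i, ∑ j, (a i * a j) * Sig i j := by
          refine Finset.sum_congr rfl fun i _ => Finset.sum_congr rfl fun j _ => ?_
          rw [integral_const_mul, hSig i j]
      _ = a ⬝ᵥ Sig.mulVec a := by
          simp only [dotProduct, Matrix.mulVec, Finset.mul_sum]
          exact Finset.sum_congr rfl fun i _ => Finset.sum_congr rfl fun j _ => by ring
  have hIg_le : ∫ ω, g ω ^ 2 ∂μ ≤ σmax ^ 2 * ∑ i, (a i) ^ 2 := by
    rw [hIg]
    have := hSigub a
    have haa : a ⬝ᵥ a = ∑ i, (a i) ^ 2 := by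
      simp [dotProduct, pow_two]
    rw [haa] at this
    exact this
  have hsg : Real.sqrt (∫ ω, g ω ^ 2 ∂μ) ≤ σmax * Real.sqrt (∑ i, (a i) ^ 2) := by
    calc Real.sqrt (∫ ω, g ω ^ 2 ∂μ) ≤ Real.sqrt (σmax ^ 2 * ∑ i, (a i) ^ 2) :=
          Real.sqrt_le_sqrt hIg_le
      _ = σmax * Real.sqrt (∑ i, (a i) ^ 2) := by
          rw [Real.sqrt_mul (sq_nonneg _), Real.sqrt_sq hσ]
  -- combine
  have hgoal : |∫ ω, ((W ω + Δh ω) * (V ω + Δπ ω)) * g ω ∂μ|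
      ≤ Real.sqrt (∫ ω, (Δπ ω * Δh ω) ^ 2 ∂μ) * (σmax * Real.sqrt (∑ i, (a i) ^ 2)) := by
    rw [hkey]
    exact hCS.trans (mul_le_mul_of_nonneg_left hsg (Real.sqrt_nonneg _))
  calc |∫ ω, ((W ω + Δh ω) * (V ω + Δπ ω)) * ∑ i, a i * X ω i ∂μ|
      = |∫ ω, ((W ω + Δh ω) * (V ω + Δπ ω)) * g ω ∂μ| := rfl
    _ ≤ Real.sqrt (∫ ω, (Δπ ω * Δh ω) ^ 2 ∂μ) * (σmax * Real.sqrt (∑ i, (a i) ^ 2)) := hgoal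
    _ = σmax * Real.sqrt (∑ i, (a i) ^ 2) * Real.sqrt (∫ ω, (Δπ ω * Δh ω) ^ 2 ∂μ) := by ring
end
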